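/- Let (U, 𝒮) be a laminar set system, let S be a set of non-singleton members of 𝒮, and let (π, σ) and (π′, σ′) be two pairs of injections from S to U, each identifying S with unique request. If π(S) = π′(S) and σ(S) = σ′(S), then π = π′ and σ = σ′. -/
import Mathlib


variable {α : Type*} [DecidableEq α] [Fintype α]

/-- A set system on the finite universe `α`: `∅ ∉ 𝒮`, `univ ∈ 𝒮`, all singletons in `𝒮`. -/
def IsSetSystem (𝒮 : Finset (Finset α)) : Prop :=
  (∅ : Finset α) ∉ 𝒮 ∧ Finset.univ ∈ 𝒮 ∧ ∀ a : α, ({a} : Finset α) ∈ 𝒮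

/-- Two sets overlap: non-disjoint and neither contains the other. -/
def Overlap (X Y : Finset α) : Prop :=
  (X ∩ Y).Nonempty ∧ ¬ X ⊆ Y ∧ ¬ Y ⊆ X

/-- A set system is laminar when no two members overlap. -/
def IsLaminar (𝒮 : Finset (Finset α)) : Prop :=
  ∀ X ∈ 𝒮, ∀ Y ∈ 𝒮, ¬ Overlap X Y

/-- `c` is a child of `x` in the laminar tree: a ⊆-maximal proper subset of `x` in `𝒮`. -/
def IsChild (𝒮 : Finset (Finset α)) (c x : Finset α) : Prop :=
  c ∈ 𝒮 ∧ c ⊂ x ∧ ∀ y ∈ 𝒮, y ⊂ x → c ⊆ y → y = c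

/-- `p` is the parent of `x`: the ⊆-minimal member of `𝒮` properly containing `x`. -/
def IsParent (𝒮 : Finset (Finset α)) (p x : Finset α) : Prop :=
  p ∈ 𝒮 ∧ x ⊂ p ∧ ∀ y ∈ 𝒮, x ⊂ y → p ⊆ y

/-- `(π, σ)` identifies `S`: a pair of injections on `S` such that each `s ∈ S` is the
⊆-minimal member of `𝒮` containing both `π s` and `σ s`. -/
def Identifies (𝒮 S : Finset (Finset α)) (π σ : Finset α → α) : Prop :=
  Set.InjOn π ↑S ∧ Set.InjOn σ ↑S ∧
  ∀ s ∈ S, π s ∈ s ∧ σ s ∈ s ∧ ∀ y ∈ 𝒮, π s ∈ y → σ s ∈ y → s ⊆ y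

/-- `x` is `s`-requested in `(π, σ)` (for `s ∈ S`): `x ⊆ s` and `π s ∈ x` or `σ s ∈ x`. -/
def Requested (S : Finset (Finset α)) (π σ : Finset α → α) (s x : Finset α) : Prop :=
  s ∈ S ∧ x ⊆ s ∧ (π s ∈ x ∨ σ s ∈ x)

/-- `(π, σ)` has unique request: every member of `𝒮` is `s`-requested for at most one `s ∈ S`. -/
def UniqueRequest (𝒮 S : Finset (Finset α)) (π σ : Finset α → α) : Prop :=
  ∀ x ∈ 𝒮, ∀ s s' : Finset α,
    Requested S π σ s x → Requested S π σ s' x → s = s'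

/-- The bi-colouring `(A, B)` (disjoint, equal cardinality) identifies `S`. -/
def BicolIdentifies (𝒮 S : Finset (Finset α)) (A B : Finset α) : Prop :=
  Disjoint A B ∧ A.card = B.card ∧
  ∃ π σ : Finset α → α, Identifies 𝒮 S π σ ∧ UniqueRequest 𝒮 S π σ ∧
    S.image π = A ∧ S.image σ = B

/-- `X` is a thin set of inner nodes: for every non-root `x ∈ X`, the parent of `x` is not
in `X` and `x` has a sibling not in `X`. -/
def Thin (𝒮 X : Finset (Finset α)) : Prop :=
  ∀ x ∈ X, x ≠ Finset.univ →
    (∀ p : Finset α, IsParent 𝒮 p x → p ∉ X) ∧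
    ∃ y p : Finset α, y ≠ x ∧ IsChild 𝒮 x p ∧ IsChild 𝒮 y p ∧ y ∉ X

/-- Two pairs identifying `S` with unique request having the same image sets agree on `S`. -/
theorem stmt_6 (𝒮 : Finset (Finset α)) (hsys : IsSetSystem 𝒮) (hlam : IsLaminar 𝒮)
    (S : Finset (Finset α)) (hS : ∀ x ∈ S, x ∈ 𝒮 ∧ ∀ a : α, x ≠ {a})
    (π σ π' σ' : Finset α → α)
    (hid : Identifies 𝒮 S π σ) (hur : UniqueRequest 𝒮 S π σ)
    (hid' : Identifies 𝒮 S π' σ') (hur' : UniqueRequest 𝒮 S π' σ')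
    (hA : S.image π = S.image π') (hB : S.image σ = S.image σ') :
    ∀ s ∈ S, π s = π' s ∧ σ s = σ' s := by
  obtain ⟨hπinj, hσinj, hprop⟩ := hid
  obtain ⟨hπ'inj, hσ'inj, hprop'⟩ := hid'
  -- Key: if a point is used by s in (π,σ) and by s' in (π',σ'), then s = s'.
  have key : ∀ s ∈ S, ∀ s' ∈ S, ∀ a : α,
      (π s = a ∨ σ s = a) → (π' s' = a ∨ σ' s' = a) → s = s' := by
    intro s hs s' hs' a ha ha'
    by_contra hne
    have has : a ∈ s := by rcases ha with h | h <;> rw [← h] <;>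
      [exact (hprop s hs).1; exact (hprop s hs).2.1]
    have has' : a ∈ s' := by rcases ha' with h | h <;> rw [← h] <;>
      [exact (hprop' s' hs').1; exact (hprop' s' hs').2.1]
    have hsmem : s ∈ 𝒮 := (hS s hs).1
    have hs'mem : s' ∈ 𝒮 := (hS s' hs').1
    have hnov := hlam s hsmem s' hs'mem
    have hcomp : s ⊆ s' ∨ s' ⊆ s := by
      by_contra h
      push_neg at h
      exact hnov ⟨⟨a, Finset.mem_inter.2 ⟨has, has'⟩⟩, h.1, h.2⟩
    rcases hcomp with hsub | hsub
    · -- s ⊊ s' : s is requested by both s and s' in (π', σ')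
      have r1 : Requested S π' σ' s s :=
        ⟨hs, subset_rfl, Or.inl (hprop' s hs).1⟩
      have r2 : Requested S π' σ' s' s := ⟨hs', hsub, by
        rcases ha' with h | h
        · exact Or.inl (h ▸ has)
        · exact Or.inr (h ▸ has)⟩
      exact hne (hur' s hsmem s s' r1 r2)
    · -- s' ⊆ s : s' is requested by both s' and s in (π, σ)
      have r1 : Requested S π σ s' s' :=
        ⟨hs', subset_rfl, Or.inl (hprop s' hs').1⟩
      have r2 : Requested S π σ s s' := ⟨hs, hsub, by
        rcases ha with h | h
        · exact Or.inl (h ▸ has')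
        · exact Or.inr (h ▸ has')⟩
      exact hne (hur s' hs'mem s' s r1 r2).symm
  intro s hs
  constructor
  · have : π' s ∈ S.image π := by
      rw [hA]; exact Finset.mem_image_of_mem π' hs
    obtain ⟨t, ht, hteq⟩ := Finset.mem_image.1 this
    have := key t ht s hs (π' s) (Or.inl hteq) (Or.inl rfl)
    exact this ▸ hteq
  · have : σ' s ∈ S.image σ := by
      rw [hB]; exact Finset.mem_image_of_mem σ' hs
    obtain ⟨t, ht, hteq⟩ := Finset.mem_image.1 this
    have := key t ht s hs (σ' s) (Or.inr hteq) (Or.inr rfl)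
    exact this ▸ hteq
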